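/- Let H be a finite-dimensional vector space with nilpotent N, N^{m+1}=0, and monodromy weight filtration W centered at m. Suppose N is an infinitesimal isometry of a nondegenerate bilinear form S on H, i.e. S(Nu,v) + S(u,Nv) = 0 for all u,v. Then the annihilator of W_l with respect to S equals W_{2m-l-1}, for all l. -/
import Mathlib

open Module


/-- The monodromy weight filtration of `N` centered at `m`. -/
def IsMonodromyWeightFiltration {K H : Type*} [Field K] [AddCommGroup H] [Module K H]
    (m : ℕ) (N : H →ₗ[K] H) (W : ℤ → Submodule K H) : Prop :=
  Monotone W ∧
  (∀ l : ℤ, l < 0 → W l = ⊥) ∧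
  (∀ l : ℤ, 2 * (m : ℤ) ≤ l → W l = ⊤) ∧
  (∀ l : ℤ, (W l).map N ≤ W (l - 2)) ∧
  (∀ l : ℕ,
    (∀ x ∈ W ((m : ℤ) + l), (N ^ l) x ∈ W ((m : ℤ) - l)) ∧
    (∀ x ∈ W ((m : ℤ) + l), (N ^ l) x ∈ W ((m : ℤ) - l - 1) → x ∈ W ((m : ℤ) + l - 1)) ∧
    (∀ y ∈ W ((m : ℤ) - l), ∃ x ∈ W ((m : ℤ) + l), y - (N ^ l) x ∈ W ((m : ℤ) - l - 1)))

section Aux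

variable {K H : Type*} [Field K] [AddCommGroup H] [Module K H]

lemma mySignPow (N : H →ₗ[K] H) (S : LinearMap.BilinForm K H)
    (hNS : ∀ u v : H, S (N u) v + S u (N v) = 0) :
    ∀ (j : ℕ) (u w : H), S ((N ^ j) u) w = (-1 : K) ^ j * S u ((N ^ j) w) := by
  intro j
  induction j with
  | zero => intro u w; simp
  | succ j ih =>
    intro u w
    have h1 : (N ^ (j + 1)) u = (N ^ j) (N u) := by
      rw [pow_succ]; rfl
    have h2 : (N ^ (j + 1)) w = N ((N ^ j) w) := by
      rw [pow_succ']; rfl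
    rw [h1, ih (N u) w]
    have h3 : S (N u) ((N ^ j) w) = - S u (N ((N ^ j) w)) :=
      eq_neg_of_add_eq_zero_left (hNS u ((N ^ j) w))
    rw [h3, h2]
    ring

lemma myMapPowMem (N : H →ₗ[K] H) (W : ℤ → Submodule K H)
    (hW4 : ∀ l : ℤ, (W l).map N ≤ W (l - 2)) :
    ∀ (j : ℕ) (b : ℤ) (x : H), x ∈ W b → (N ^ j) x ∈ W (b - 2 * j) := by
  intro j
  induction j with
  | zero => intro b x hx; simpa using hx
  | succ j ih =>
    intro b x hx
    have h1 : (N ^ (j + 1)) x = N ((N ^ j) x) := by rw [pow_succ']; rfl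
    have h2 : N ((N ^ j) x) ∈ W (b - 2 * j - 2) :=
      hW4 _ ⟨(N ^ j) x, ih b x hx, rfl⟩
    rw [h1]
    have h3 : b - 2 * (j : ℤ) - 2 = b - 2 * ((j : ℕ) + 1 : ℕ) := by push_cast; ring
    rwa [h3] at h2


lemma myOrth {m : ℕ} (N : H →ₗ[K] H) (W : ℤ → Submodule K H)
    (hW : IsMonodromyWeightFiltration m N W)
    (S : LinearMap.BilinForm K H)
    (hNS : ∀ u v : H, S (N u) v + S u (N v) = 0) :
    ∀ (k : ℕ) (a b : ℤ), a + b ≤ 2 * (m : ℤ) - 1 → min a b < (k : ℤ) →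
      ∀ v ∈ W a, ∀ w ∈ W b, S v w = 0 := by
  obtain ⟨hW1, hW2, hW3, hW4, hW5⟩ := hW
  intro k
  induction k with
  | zero =>
    intro a b _ hmin v hv w hw
    have h : a < 0 ∨ b < 0 := by omega
    rcases h with h | h
    · rw [hW2 a h] at hv
      rw [Submodule.mem_bot] at hv
      simp [hv]
    · rw [hW2 b h] at hw
      rw [Submodule.mem_bot] at hw
      simp [hw]
  | succ k ih =>
    intro a b hab hmin v hv w hw
    by_cases hk : min a b < (k : ℤ)
    · exact ih a b hab hk v hv w hw
    · have hmineq : min a b = (k : ℤ) := by push_cast at hmin ⊢; omega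
      rcases le_total a b with hab2 | hab2
      · have ha : a = (k : ℤ) := by omega
        set l : ℕ := ((m : ℤ) - a).toNat with hldef
        have hl : (l : ℤ) = (m : ℤ) - a := Int.toNat_of_nonneg (by omega)
        have hia : (m : ℤ) - l = a := by omega
        obtain ⟨x, hx, hx'⟩ := (hW5 l).2.2 v (by rw [hia]; exact hv)
        have hv' : v - (N ^ l) x ∈ W (a - 1) := by
          have he : (m : ℤ) - l - 1 = a - 1 := by omega
          rwa [he] at hx'
        have t2 : S (v - (N ^ l) x) w = 0 :=
          ih (a - 1) b (by omega) (by omega) _ hv' w hw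
        have hNw : (N ^ l) w ∈ W (b - 2 * l) := myMapPowMem N W hW4 l b w hw
        have t1 : S x ((N ^ l) w) = 0 :=
          ih ((m : ℤ) + l) (b - 2 * l) (by omega) (by omega) x hx _ hNw
        have t1' : S ((N ^ l) x) w = 0 := by
          rw [mySignPow N S hNS l x w, t1, mul_zero]
        have hre : (N ^ l) x + (v - (N ^ l) x) = v := by abel
        have key : S v w = S ((N ^ l) x + (v - (N ^ l) x)) w := by
          conv_lhs => rw [← hre]
        rw [key, map_add, LinearMap.add_apply, t1', t2, add_zero]
      · have hb : b = (k : ℤ) := by omega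
        set l : ℕ := ((m : ℤ) - b).toNat with hldef
        have hl : (l : ℤ) = (m : ℤ) - b := Int.toNat_of_nonneg (by omega)
        have hib : (m : ℤ) - l = b := by omega
        obtain ⟨x, hx, hx'⟩ := (hW5 l).2.2 w (by rw [hib]; exact hw)
        have hw' : w - (N ^ l) x ∈ W (b - 1) := by
          have he : (m : ℤ) - l - 1 = b - 1 := by omega
          rwa [he] at hx'
        have t2 : S v (w - (N ^ l) x) = 0 :=
          ih a (b - 1) (by omega) (by omega) v hv _ hw'
        have hNv : (N ^ l) v ∈ W (a - 2 * l) := myMapPowMem N W hW4 l a v hv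
        have t0 : S ((N ^ l) v) x = 0 :=
          ih (a - 2 * l) ((m : ℤ) + l) (by omega) (by omega) _ hNv x hx
        have t1 : S v ((N ^ l) x) = 0 := by
          have hs := mySignPow N S hNS l v x
          rw [t0] at hs
          have hne : ((-1 : K) ^ l) ≠ 0 := pow_ne_zero _ (by norm_num)
          exact (mul_eq_zero.mp hs.symm).resolve_left hne
        have hre : (N ^ l) x + (w - (N ^ l) x) = w := by abel
        have key : S v w = S v ((N ^ l) x + (w - (N ^ l) x)) := by
          conv_lhs => rw [← hre]
        rw [key, map_add, t1, t2, add_zero]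

lemma myGr {m : ℕ} [FiniteDimensional K H] (N : H →ₗ[K] H) (W : ℤ → Submodule K H)
    (hW : IsMonodromyWeightFiltration m N W) (l : ℕ) :
    finrank K (W ((m:ℤ)+l)) + finrank K (W ((m:ℤ)-l-1)) =
      finrank K (W ((m:ℤ)-l)) + finrank K (W ((m:ℤ)+l-1)) := by
  obtain ⟨hW1, hW2, hW3, hW4, hW5⟩ := hW
  have hCB : W ((m:ℤ)-l-1) ≤ W ((m:ℤ)-l) := hW1 (by omega)
  have hKA : W ((m:ℤ)+l-1) ≤ W ((m:ℤ)+l) := hW1 (by omega)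
  set A := W ((m:ℤ)+l) with hA
  set B := W ((m:ℤ)-l) with hB
  set C' : Submodule K B := (W ((m:ℤ)-l-1)).comap B.subtype with hC'
  have hg : ∀ x ∈ A, (N^l) x ∈ B := (hW5 l).1
  set f : A →ₗ[K] (B ⧸ C') := C'.mkQ.comp ((N^l).restrict hg) with hf
  have hsurj : Function.Surjective f := by
    intro yq
    obtain ⟨y, rfl⟩ := C'.mkQ_surjective yq
    obtain ⟨x, hx, hx'⟩ := (hW5 l).2.2 y.1 y.2
    refine ⟨⟨x, hx⟩, ?_⟩
    rw [hf]
    simp only [LinearMap.comp_apply, Submodule.mkQ_apply]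
    rw [Submodule.Quotient.eq]
    rw [hC', Submodule.mem_comap]
    have hco : B.subtype ((N^l).restrict hg ⟨x,hx⟩ - y) = (N^l) x - y.1 := by
      simp [LinearMap.restrict_apply]
    rw [hco]
    have hneg := Submodule.neg_mem _ hx'
    simpa [neg_sub] using hneg
  have hker : LinearMap.ker f = (W ((m:ℤ)+l-1)).comap A.subtype := by
    ext x
    rw [LinearMap.mem_ker, hf]
    simp only [LinearMap.comp_apply, Submodule.mkQ_apply, Submodule.Quotient.mk_eq_zero]
    rw [hC', Submodule.mem_comap, Submodule.mem_comap]
    have hco : (B.subtype ((N^l).restrict hg x)) = (N^l) x.1 := by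
      simp [LinearMap.restrict_apply]
    rw [hco]
    constructor
    · intro h; exact (hW5 l).2.1 x.1 x.2 h
    · intro h
      have h2 := myMapPowMem N W hW4 l ((m:ℤ)+l-1) x.1 h
      have he : (m:ℤ)+l-1-2*l = (m:ℤ)-l-1 := by ring
      rwa [he] at h2
  have h1 := LinearMap.finrank_range_add_finrank_ker f
  rw [LinearMap.range_eq_top.mpr hsurj, finrank_top] at h1
  have h2 := Submodule.finrank_quotient_add_finrank C'
  have h3 : finrank K C' = finrank K (W ((m:ℤ)-l-1)) :=
    (Submodule.comapSubtypeEquivOfLe hCB).finrank_eq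
  have h4 : finrank K (LinearMap.ker f) = finrank K (W ((m:ℤ)+l-1)) := by
    rw [hker]; exact (Submodule.comapSubtypeEquivOfLe hKA).finrank_eq
  omega


lemma myDim {m : ℕ} [FiniteDimensional K H] (N : H →ₗ[K] H) (W : ℤ → Submodule K H)
    (hW : IsMonodromyWeightFiltration m N W) :
    ∀ l : ℤ, finrank K (W l) + finrank K (W (2*(m:ℤ)-l-1)) = finrank K H := by
  have hbot : ∀ j : ℤ, j < 0 → finrank K (W j) = 0 := fun j h => by
    rw [hW.2.1 j h]; exact finrank_bot K H
  have htop : ∀ j : ℤ, 2*(m:ℤ) ≤ j → finrank K (W j) = finrank K H := fun j h => by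
    rw [hW.2.2.1 j h]; exact finrank_top K H
  have hq : ∀ k : ℕ, ∀ j : ℤ, 0 ≤ j → (m:ℤ) - k ≤ j →
      finrank K (W ((m:ℤ)+j)) + finrank K (W ((m:ℤ)-j-1)) = finrank K H := by
    intro k
    induction k with
    | zero =>
      intro j hj0 hjm
      have hjm' : (m:ℤ) ≤ j := by push_cast at hjm; omega
      rw [htop ((m:ℤ)+j) (by omega), hbot ((m:ℤ)-j-1) (by omega)]
      omega
    | succ k ih =>
      intro j hj0 hjm
      by_cases hc : (m:ℤ) - k ≤ j
      · exact ih j hj0 hc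
      · have hgr := myGr N W hW (j+1).toNat
        have hc1 : (((j+1).toNat : ℕ) : ℤ) = j + 1 := Int.toNat_of_nonneg (by omega)
        rw [hc1] at hgr
        have prev := ih (j+1) (by omega) (by push_cast at hjm ⊢; omega)
        have e3 : (m:ℤ) - (j+1) = m - j - 1 := by ring
        have e4 : (m:ℤ) + (j+1) - 1 = m + j := by ring
        have e5 : (m:ℤ) - j - 1 - 1 = m - (j+1) - 1 := by ring
        rw [e3, e4, e5] at hgr
        omega
  intro l
  rcases lt_or_ge l 0 with h | h
  · rw [hbot l h, htop (2*(m:ℤ)-l-1) (by omega)]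
    omega
  rcases le_or_gt (m:ℤ) l with h2 | h2
  · have hh := hq m (l - m) (by omega) (by omega)
    have e1 : (m:ℤ) + (l - m) = l := by ring
    have e2 : (m:ℤ) - (l - m) - 1 = 2*m - l - 1 := by ring
    rwa [e1, e2] at hh
  · have hh := hq m ((m:ℤ) - l - 1) (by omega) (by omega)
    have e1 : (m:ℤ) + ((m:ℤ) - l - 1) = 2*m - l - 1 := by ring
    have e2 : (m:ℤ) - ((m:ℤ) - l - 1) - 1 = l := by ring
    rw [e1, e2] at hh
    omega


end Aux


/-- If `N` is an infinitesimal isometry of a nondegenerate bilinear form `S`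
(`S(Nu,v) + S(u,Nv) = 0`), then the annihilator of `W_l` with respect to `S`
equals `W_{2m-l-1}`, for all `l`. -/
theorem stmt_3 {K H : Type*} [Field K] [CharZero K] [AddCommGroup H] [Module K H]
    [FiniteDimensional K H] (m : ℕ) (N : H →ₗ[K] H) (hN : N ^ (m + 1) = 0)
    (W : ℤ → Submodule K H) (hW : IsMonodromyWeightFiltration m N W)
    (S : LinearMap.BilinForm K H) (hSnd : S.Nondegenerate)
    (hNS : ∀ u v : H, S (N u) v + S u (N v) = 0) :
    ∀ l : ℤ, ∀ v : H, (∀ w ∈ W l, S v w = 0) ↔ v ∈ W (2 * (m : ℤ) - l - 1) := by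
  intro l v
  have horth := myOrth N W hW S hNS
  have hdim := myDim N W hW l
  set e := S.toDual hSnd with he
  set O : Submodule K H := (W l).dualAnnihilator.comap e.toLinearMap with hO
  have hmemO : ∀ u : H, u ∈ O ↔ ∀ w ∈ W l, S u w = 0 := by
    intro u
    rw [hO, Submodule.mem_comap, Submodule.mem_dualAnnihilator]
    exact Iff.rfl
  have hfin1 : finrank K O = finrank K (W l).dualAnnihilator := by
    rw [hO, Submodule.comap_equiv_eq_map_symm]
    exact LinearEquiv.finrank_map_eq _ _
  have hfin2 : finrank K (W l).dualAnnihilator + finrank K (W l) = finrank K H := by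
    rw [← (Subspace.quotEquivAnnihilator (W l)).finrank_eq]
    exact Submodule.finrank_quotient_add_finrank (W l)
  have hle : W (2*(m:ℤ)-l-1) ≤ O := by
    intro u hu
    rw [hmemO]
    intro w hw
    exact horth ((min (2*(m:ℤ)-l-1) l).toNat + 1) _ l (by omega)
      (by omega) u hu w hw
  have heq : W (2*(m:ℤ)-l-1) = O := by
    apply Submodule.eq_of_le_of_finrank_le hle
    omega
  rw [← hmemO v, heq]
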